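/- For a one-dimensional Gaussian mixture likelihood, the gradient update relation for mixing weights holds: if ℒ(θ) = Σₜ log(Σⱼ αⱼ pⱼ(xₜ)) with pⱼ fixed positive functions (componentwise densities given current μⱼ,Σⱼ), and h_j(t) = αⱼpⱼ(xₜ)/Σᵢαᵢpᵢ(xₜ), then the EM update α_j⁺ = (1/N)Σₜ h_j(t) satisfies α⁺ - α = P_α ∇_α ℒ(θ), where P_α = (1/N)(diag(α) - ααᵀ). -/
import Mathlib


open Matrix

theorem stmt_14 (N K : ℕ) (hN : 1 ≤ N)
    (p : Fin K → Fin N → ℝ) (hp : ∀ j t, 0 < p j t)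
    (α : Fin K → ℝ) (hα : ∀ j, 0 < α j) (hsum : ∑ j, α j = 1) :
    (fun j => (1 / (N:ℝ)) * (∑ t, α j * p j t / ∑ i, α i * p i t) - α j)
      = ((1 / (N:ℝ)) • (Matrix.diagonal α - Matrix.vecMulVec α α)) *ᵥ
          (fun j => ∑ t, p j t / ∑ i, α i * p i t) := by
  have hKne : (Finset.univ : Finset (Fin K)).Nonempty := by
    by_contra h
    rw [Finset.not_nonempty_iff_eq_empty] at h
    rw [h, Finset.sum_empty] at hsum
    norm_num at hsum
  have hS : ∀ t : Fin N, (0:ℝ) < ∑ i, α i * p i t := fun t =>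
    Finset.sum_pos (fun i _ => mul_pos (hα i) (hp i t)) hKne
  set S : Fin N → ℝ := fun t => ∑ i, α i * p i t with hSdef
  set g : Fin K → ℝ := fun k => ∑ t, p k t / S t with hg
  have key : ∑ k, α k * g k = (N:ℝ) := by
    have h1 : ∀ k, α k * g k = ∑ t, α k * p k t / S t := by
      intro k
      rw [hg, Finset.mul_sum]
      exact Finset.sum_congr rfl fun t _ => (mul_div_assoc _ _ _).symm
    calc ∑ k, α k * g k = ∑ k, ∑ t, α k * p k t / S t :=
          Finset.sum_congr rfl fun k _ => h1 k
      _ = ∑ t, ∑ k, α k * p k t / S t := Finset.sum_comm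
      _ = ∑ t : Fin N, (1:ℝ) := Finset.sum_congr rfl fun t _ => by
          rw [← Finset.sum_div]
          exact div_self (hS t).ne'
      _ = (N:ℝ) := by simp
  funext j
  have hrow : ∀ i, ((1 / (N:ℝ)) • (Matrix.diagonal α - Matrix.vecMulVec α α)) j i
      = (1 / (N:ℝ)) * ((if j = i then α j else 0) - α j * α i) := by
    intro i
    simp [Matrix.smul_apply, Matrix.sub_apply, Matrix.diagonal, Matrix.vecMulVec,
      smul_eq_mul]
  show (1 / (N:ℝ)) * (∑ t, α j * p j t / S t) - α j = _
  rw [Matrix.mulVec]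
  have expand : ∀ i, (((1 / (N:ℝ)) • (Matrix.diagonal α - Matrix.vecMulVec α α)) j i) * g i
      = (if j = i then (1 / (N:ℝ)) * (α j * g i) else 0)
        - (1 / (N:ℝ)) * (α j * (α i * g i)) := by
    intro i
    rw [hrow i]
    by_cases h : j = i <;> simp [h] <;> ring
  have this1 : (((1 / (N:ℝ)) • (Matrix.diagonal α - Matrix.vecMulVec α α)) j) ⬝ᵥ g
      = (1 / (N:ℝ)) * (α j * g j) - (1 / (N:ℝ)) * (α j * ∑ k, α k * g k) := by
    rw [dotProduct]
    rw [Finset.sum_congr rfl fun i _ => expand i, Finset.sum_sub_distrib,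
      Finset.sum_ite_eq Finset.univ j fun i => (1 / (N:ℝ)) * (α j * g i)]
    simp [Finset.mul_sum, mul_assoc]
  rw [this1, key]
  have hNne : (N:ℝ) ≠ 0 := by positivity
  have h1 : α j * g j = ∑ t, α j * p j t / S t := by
    rw [hg, Finset.mul_sum]
    exact Finset.sum_congr rfl fun t _ => (mul_div_assoc _ _ _).symm
  rw [← h1]
  field_simp
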